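/- Let w be a graphon with Γ(w)>0 and set α = Γ(w)^{2/7}. Define R_w on Δ = {(x,y)∈[0,1]² : x≤y} by R_w(x,y) = sup{ w̄(S,T) : S,T⊆[0,1] measurable, S×T ⊆ [0,x]×[y,1], |S|=|T|=α } (with sup ∅ = 0), and extend symmetrically by R_w(y,x)=R_w(x,y). Then R_w is a Robinson graphon; in particular, if (a,b)∈Δ and (x,y) ∈ ([a,b]×[a,b])∩Δ, then R_w(a,b) ≤ R_w(x,y). -/

import Mathlib

open MeasureTheory Set

/-- `Γ(w, A)`. -/
noncomputable def gammaA (w : ℝ → ℝ → ℝ) (A : Set ℝ) : ℝ :=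
  ∫ y in Icc (0:ℝ) 1, ∫ z in Icc (0:ℝ) 1,
    if y < z then
      max (∫ x in A ∩ Icc 0 y, (w x z - w x y)) 0
        + max (∫ x in A ∩ Icc z 1, (w x y - w x z)) 0
    else 0

/-- `Γ(w) = sup { Γ(w,A) : A ⊆ [0,1] measurable }`. -/
noncomputable def Gamma (w : ℝ → ℝ → ℝ) : ℝ :=
  sSup {r : ℝ | ∃ A : Set ℝ, MeasurableSet A ∧ A ⊆ Icc 0 1 ∧ r = gammaA w A}

/-- A graphon: symmetric, measurable, `[0,1]`-valued on `[0,1]²`. -/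
def IsGraphon (w : ℝ → ℝ → ℝ) : Prop :=
  Measurable (Function.uncurry w) ∧ (∀ x y, w x y = w y x) ∧
    ∀ x y : ℝ, x ∈ Icc (0:ℝ) 1 → y ∈ Icc (0:ℝ) 1 → w x y ∈ Icc (0:ℝ) 1

/-- The Robinson property. -/
def IsRobinson (w : ℝ → ℝ → ℝ) : Prop :=
  ∀ x y z : ℝ, 0 ≤ x → x ≤ y → y ≤ z → z ≤ 1 → w x z ≤ min (w x y) (w y z)

/-- The average value `w̄(S,T)` of `w` over `S × T`. -/
noncomputable def avgOn (w : ℝ → ℝ → ℝ) (S T : Set ℝ) : ℝ :=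
  (∫ x in S, ∫ y in T, w x y) / ((volume S).toReal * (volume T).toReal)

/-- The Robinson approximation `R_w`: for `x ≤ y`,
`R_w(x,y) = sup { w̄(S,T) : S×T ⊆ [0,x]×[y,1], |S|=|T|=α }` (with `sup ∅ = 0`, which is
the convention of `sSup` on `ℝ`), extended symmetrically. -/
noncomputable def robApprox (w : ℝ → ℝ → ℝ) (α : ℝ) (x y : ℝ) : ℝ :=
  if x ≤ y then
    sSup {r : ℝ | ∃ S T : Set ℝ, MeasurableSet S ∧ MeasurableSet T ∧
      S ×ˢ T ⊆ Icc 0 x ×ˢ Icc y 1 ∧ (volume S).toReal = α ∧ (volume T).toReal = α ∧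
      r = avgOn w S T}
  else
    sSup {r : ℝ | ∃ S T : Set ℝ, MeasurableSet S ∧ MeasurableSet T ∧
      S ×ˢ T ⊆ Icc 0 y ×ˢ Icc x 1 ∧ (volume S).toReal = α ∧ (volume T).toReal = α ∧
      r = avgOn w S T}

def vset (w : ℝ → ℝ → ℝ) (α x y : ℝ) : Set ℝ :=
  {r : ℝ | ∃ S T : Set ℝ, MeasurableSet S ∧ MeasurableSet T ∧
      S ×ˢ T ⊆ Icc 0 x ×ˢ Icc y 1 ∧ (volume S).toReal = α ∧ (volume T).toReal = α ∧
      r = avgOn w S T}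

lemma vset_mono {w α} {x y x' y' : ℝ} (hx : x ≤ x') (hy : y' ≤ y) :
    vset w α x y ⊆ vset w α x' y' := by
  rintro r ⟨S, T, hS, hT, hsub, hvS, hvT, rfl⟩
  exact ⟨S, T, hS, hT, hsub.trans (prod_mono (Icc_subset_Icc_right hx)
    (Icc_subset_Icc_left hy)), hvS, hvT, rfl⟩

lemma mem_vset_sets {w α x y r} (hα : 0 < α) (h : r ∈ vset w α x y) :
    ∃ S T : Set ℝ, MeasurableSet S ∧ MeasurableSet T ∧ S ⊆ Icc 0 x ∧ T ⊆ Icc y 1 ∧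
      (volume S).toReal = α ∧ (volume T).toReal = α ∧ r = avgOn w S T := by
  obtain ⟨S, T, hS, hT, hsub, hvS, hvT, rfl⟩ := h
  have hTne : T.Nonempty := by
    by_contra hne
    rw [not_nonempty_iff_eq_empty] at hne
    rw [hne] at hvT; simp at hvT; exact absurd hvT (by linarith)
  have hSne : S.Nonempty := by
    by_contra hne
    rw [not_nonempty_iff_eq_empty] at hne
    rw [hne] at hvS; simp at hvS; exact absurd hvS (by linarith)
  obtain ⟨t0, ht0⟩ := hTne
  obtain ⟨s0, hs0⟩ := hSne
  refine ⟨S, T, hS, hT, fun s hs => (hsub (mk_mem_prod hs ht0)).1,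
    fun t ht => (hsub (mk_mem_prod hs0 ht)).2, hvS, hvT, rfl⟩

lemma subset_Icc_bounds {α x y : ℝ} {S : Set ℝ} (hα : 0 < α) (hS : S ⊆ Icc x y)
    (hv : (volume S).toReal = α) : α ≤ y - x := by
  have hxy : 0 ≤ y - x := by
    by_contra h; push_neg at h
    have he : Icc x y = ∅ := Icc_eq_empty (by linarith)
    have hSe : S = ∅ := eq_empty_of_subset_empty (he ▸ hS)
    rw [hSe] at hv; simp at hv; linarith
  have h1 : volume S ≤ volume (Icc x y) := measure_mono hS
  rw [Real.volume_Icc] at h1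
  have hfin : volume S ≠ ⊤ := ne_top_of_le_ne_top ENNReal.ofReal_ne_top h1
  calc α = (volume S).toReal := hv.symm
    _ ≤ (ENNReal.ofReal (y - x)).toReal := ENNReal.toReal_mono ENNReal.ofReal_ne_top h1
    _ = y - x := ENNReal.toReal_ofReal hxy

lemma g_meas {w : ℝ → ℝ → ℝ} (hw : Measurable (Function.uncurry w)) (T : Set ℝ) :
    Measurable fun s => ∫ t in T, w s t :=
  (MeasureTheory.StronglyMeasurable.integral_prod_right
    (hw.stronglyMeasurable) (ν := volume.restrict T)).measurable

lemma integrableOn_of_bounded' {f : ℝ → ℝ} {S : Set ℝ} {C : ℝ}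
    (hSm : MeasurableSet S) (hS : volume S ≠ ⊤) (hf : Measurable f)
    (hb : ∀ s ∈ S, |f s| ≤ C) : IntegrableOn f S := by
  have : IsFiniteMeasure (volume.restrict S) :=
    ⟨by rwa [Measure.restrict_apply_univ, lt_top_iff_ne_top]⟩
  refine ⟨hf.aestronglyMeasurable, HasFiniteIntegral.of_bounded (C := C) ?_⟩
  filter_upwards [ae_restrict_mem hSm] with s hs
  exact hb s hs

lemma avgOn_mem_Icc {w : ℝ → ℝ → ℝ} (hw : IsGraphon w) {α : ℝ} (hα : 0 < α)
    {S T : Set ℝ} (hS : MeasurableSet S) (hT : MeasurableSet T)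
    (hS1 : S ⊆ Icc 0 1) (hT1 : T ⊆ Icc 0 1)
    (hvS : (volume S).toReal = α) (hvT : (volume T).toReal = α) :
    avgOn w S T ∈ Icc (0:ℝ) 1 := by
  have hTfin : volume T ≠ ⊤ := by
    refine ne_top_of_le_ne_top ?_ (measure_mono hT1)
    rw [Real.volume_Icc]; exact ENNReal.ofReal_ne_top
  have hSfin : volume S ≠ ⊤ := by
    refine ne_top_of_le_ne_top ?_ (measure_mono hS1)
    rw [Real.volume_Icc]; exact ENNReal.ofReal_ne_top
  set g : ℝ → ℝ := fun s => ∫ t in T, w s t with hg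
  have hg0 : ∀ s ∈ Icc (0:ℝ) 1, 0 ≤ g s := fun s hs =>
    setIntegral_nonneg hT fun t ht => (hw.2.2 s t hs (hT1 ht)).1
  have hgα : ∀ s ∈ Icc (0:ℝ) 1, g s ≤ α := by
    intro s hs
    by_cases hint : IntegrableOn (fun t => w s t) T
    · calc g s ≤ ∫ t in T, (1:ℝ) := by
            refine setIntegral_mono_on hint ?_ hT fun t ht => (hw.2.2 s t hs (hT1 ht)).2
            exact integrableOn_const hTfin
        _ = (volume T).toReal := by rw [setIntegral_const]; simp; rfl
        _ = α := hvT
    · rw [hg]; simp only []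
      rw [integral_undef hint]; exact le_of_lt hα
  have hnum0 : 0 ≤ ∫ s in S, g s := setIntegral_nonneg hS fun s hs => hg0 s (hS1 hs)
  have hnum1 : (∫ s in S, g s) ≤ α * α := by
    by_cases hint : IntegrableOn g S
    · calc (∫ s in S, g s) ≤ ∫ s in S, α := by
            refine setIntegral_mono_on hint ?_ hS fun s hs => hgα s (hS1 hs)
            exact integrableOn_const hSfin
        _ = α * α := by rw [setIntegral_const]; rw [smul_eq_mul, measureReal_def, hvS]
    · rw [integral_undef hint]; positivity
  have hd : (volume S).toReal * (volume T).toReal = α * α := by rw [hvS, hvT]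
  constructor
  · exact div_nonneg hnum0 (by rw [hd]; positivity)
  · rw [avgOn, hd, div_le_one (by positivity)]; exact hnum1

lemma vset_subset_Icc {w : ℝ → ℝ → ℝ} (hw : IsGraphon w) {α : ℝ} (hα : 0 < α)
    {x y : ℝ} (hx0 : 0 ≤ x) (hx1 : x ≤ 1) (hy0 : 0 ≤ y) (hy1 : y ≤ 1) :
    vset w α x y ⊆ Icc 0 1 := by
  intro r hr
  obtain ⟨S, T, hS, hT, hSx, hTy, hvS, hvT, rfl⟩ := mem_vset_sets hα hr
  exact avgOn_mem_Icc hw hα hS hT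
    (hSx.trans (Icc_subset_Icc le_rfl hx1))
    (hTy.trans (Icc_subset_Icc hy0 le_rfl)) hvS hvT

lemma sSup_mem_Icc01 {V : Set ℝ} (h : V ⊆ Icc 0 1) : sSup V ∈ Icc (0:ℝ) 1 := by
  rcases eq_empty_or_nonempty V with rfl | ⟨v, hv⟩
  · simp [Real.sSup_empty]
  · constructor
    · exact le_trans (h hv).1 (le_csSup ⟨1, fun a ha => (h ha).2⟩ hv)
    · exact csSup_le ⟨v, hv⟩ fun a ha => (h ha).2

lemma sSup_le_sSup01 {A B : Set ℝ} (hAB : A ⊆ B) (hB : B ⊆ Icc 0 1) :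
    sSup A ≤ sSup B := by
  rcases eq_empty_or_nonempty A with rfl | hA
  · rw [Real.sSup_empty]; exact (sSup_mem_Icc01 hB).1
  · exact csSup_le_csSup ⟨1, fun a ha => (hB ha).2⟩ hA hAB

noncomputable def phi (w : ℝ → ℝ → ℝ) (α x y : ℝ) : EReal :=
  sSup ((fun r : ℝ => (r : EReal)) '' vset w α x y)

lemma toReal_sSup_image (V : Set ℝ) :
    sSup V = (sSup ((fun r : ℝ => (r : EReal)) '' V)).toReal := by
  rcases eq_empty_or_nonempty V with rfl | hV
  · simp [Real.sSup_empty]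
  by_cases hbdd : BddAbove V
  · have h1 : sSup ((fun r : ℝ => (r : EReal)) '' V) = ((sSup V : ℝ) : EReal) := by
      apply le_antisymm
      · apply sSup_le
        rintro a ⟨r, hr, rfl⟩
        exact EReal.coe_le_coe_iff.2 (le_csSup hbdd hr)
      · obtain ⟨v, hv⟩ := hV
        have hub : ∀ r ∈ V, (r : EReal) ≤ sSup ((fun r : ℝ => (r : EReal)) '' V) :=
          fun r hr => le_sSup ⟨r, hr, rfl⟩
        set a := sSup ((fun r : ℝ => (r : EReal)) '' V) with ha
        by_cases htop : a = ⊤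
        · rw [htop]; exact le_top
        have hbot : a ≠ ⊥ := fun hb => by
          have := hub v hv; rw [hb] at this; exact absurd this (by simp)
        have hcoe : ((a.toReal : ℝ) : EReal) = a := EReal.coe_toReal htop hbot
        rw [← hcoe]
        exact EReal.coe_le_coe_iff.2 (csSup_le ⟨v, hv⟩ fun r hr =>
          EReal.coe_le_coe_iff.1 (by rw [hcoe]; exact hub r hr))
    rw [h1, EReal.toReal_coe]
  · rw [Real.sSup_of_not_bddAbove hbdd]
    have h1 : sSup ((fun r : ℝ => (r : EReal)) '' V) = ⊤ := by
      by_contra h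
      have hub : ∀ r ∈ V, (r : EReal) ≤ sSup ((fun r : ℝ => (r : EReal)) '' V) :=
        fun r hr => le_sSup ⟨r, hr, rfl⟩
      set a := sSup ((fun r : ℝ => (r : EReal)) '' V) with ha
      obtain ⟨v, hv⟩ := hV
      have hbot : a ≠ ⊥ := fun hb => by
        have := hub v hv; rw [hb] at this; exact absurd this (by simp)
      have hcoe : ((a.toReal : ℝ) : EReal) = a := EReal.coe_toReal h hbot
      exact hbdd ⟨a.toReal, fun r hr =>
        EReal.coe_le_coe_iff.1 (by rw [hcoe]; exact hub r hr)⟩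
    rw [h1, EReal.toReal_top]

lemma phi_mono {w α} {x y x' y' : ℝ} (hx : x ≤ x') (hy : y' ≤ y) :
    phi w α x y ≤ phi w α x' y' :=
  sSup_le_sSup (image_mono (vset_mono hx hy))

lemma vset_empty_left {w α} {x y : ℝ} (hα : 0 < α) (hx : x < α) : vset w α x y = ∅ := by
  rw [eq_empty_iff_forall_notMem]
  intro r hr
  obtain ⟨S, T, _, _, hSx, _, hvS, _, _⟩ := mem_vset_sets hα hr
  have := subset_Icc_bounds hα hSx hvS
  linarith

lemma phi_bot_left {w α} {x y : ℝ} (hα : 0 < α) (hx : x < α) : phi w α x y = ⊥ := by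
  rw [phi, vset_empty_left hα hx, image_empty, sSup_empty]

lemma base_mem_vset {w : ℝ → ℝ → ℝ} (hw : IsGraphon w) {α x y : ℝ} (hα : 0 < α)
    (hα1 : α ≤ 1) (hx : α ≤ x) (hy : y ≤ 1 - α) :
    avgOn w (Icc 0 α) (Icc (1 - α) 1) ∈ vset w α x y ∧
      0 ≤ avgOn w (Icc 0 α) (Icc (1 - α) 1) := by
  constructor
  · refine ⟨Icc 0 α, Icc (1-α) 1, measurableSet_Icc, measurableSet_Icc, ?_, ?_, ?_, rfl⟩
    · exact prod_mono (Icc_subset_Icc le_rfl hx) (Icc_subset_Icc hy le_rfl)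
    · rw [Real.volume_Icc, ENNReal.toReal_ofReal (by linarith)]; ring
    · rw [Real.volume_Icc, ENNReal.toReal_ofReal (by linarith)]; ring
  · exact (avgOn_mem_Icc hw hα measurableSet_Icc measurableSet_Icc
      (Icc_subset_Icc le_rfl hα1) (Icc_subset_Icc (by linarith) le_rfl)
      (by rw [Real.volume_Icc, ENNReal.toReal_ofReal (by linarith)]; ring)
      (by rw [Real.volume_Icc, ENNReal.toReal_ofReal (by linarith)]; ring)).1

lemma phi_nonneg {w : ℝ → ℝ → ℝ} (hw : IsGraphon w) {α x y : ℝ} (hα : 0 < α)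
    (hα1 : α ≤ 1) (hx : α ≤ x) (hy : y ≤ 1 - α) : (0 : EReal) ≤ phi w α x y := by
  obtain ⟨hmem, hnn⟩ := base_mem_vset hw hα hα1 hx hy
  calc (0:EReal) ≤ ((avgOn w (Icc 0 α) (Icc (1-α) 1) : ℝ) : EReal) := by
        exact_mod_cast hnn
    _ ≤ phi w α x y := le_sSup ⟨_, hmem, rfl⟩

lemma setIntegral_le_toReal {f : ℝ → ℝ} {E : Set ℝ} (hE : MeasurableSet E)
    (hEfin : volume E ≠ ⊤) (hb : ∀ x ∈ E, f x ≤ 1) :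
    (∫ x in E, f x) ≤ (volume E).toReal := by
  by_cases hint : IntegrableOn f E
  · calc (∫ x in E, f x) ≤ (∫ _x in E, (1:ℝ)) := by
          refine setIntegral_mono_on hint ?_ hE hb
          exact integrableOn_const hEfin
      _ = (volume E).toReal := by rw [setIntegral_const]; simp; rfl
  · rw [integral_undef hint]; exact ENNReal.toReal_nonneg

lemma Icc_vol_fin {a b : ℝ} : volume (Icc a b) ≠ ⊤ := by
  rw [Real.volume_Icc]; exact ENNReal.ofReal_ne_top

lemma gammaA_le_one {w : ℝ → ℝ → ℝ} (hw : IsGraphon w) {A : Set ℝ}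
    (hA : MeasurableSet A) (hA1 : A ⊆ Icc 0 1) : gammaA w A ≤ 1 := by
  have hGnn : ∀ y z : ℝ, (0:ℝ) ≤ (if y < z then
      max (∫ x in A ∩ Icc 0 y, (w x z - w x y)) 0
        + max (∫ x in A ∩ Icc z 1, (w x y - w x z)) 0 else 0) := by
    intro y z
    split
    · positivity
    · exact le_rfl
  have hGle : ∀ y ∈ Icc (0:ℝ) 1, ∀ z ∈ Icc (0:ℝ) 1, (if y < z then
      max (∫ x in A ∩ Icc 0 y, (w x z - w x y)) 0
        + max (∫ x in A ∩ Icc z 1, (w x y - w x z)) 0 else 0) ≤ 1 := by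
    intro y hy z hz
    split
    case isFalse => norm_num
    case isTrue hyz =>
    have h1 : max (∫ x in A ∩ Icc 0 y, (w x z - w x y)) 0 ≤ y := by
      refine max_le ?_ hy.1
      calc (∫ x in A ∩ Icc 0 y, (w x z - w x y))
          ≤ (volume (A ∩ Icc 0 y)).toReal := by
            refine setIntegral_le_toReal (hA.inter measurableSet_Icc)
              (ne_top_of_le_ne_top Icc_vol_fin (measure_mono inter_subset_right)) ?_
            intro x hx
            have hx1 : x ∈ Icc (0:ℝ) 1 := hA1 hx.1
            have := (hw.2.2 x z hx1 hz).2
            have := (hw.2.2 x y hx1 hy).1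
            linarith
        _ ≤ (volume (Icc (0:ℝ) y)).toReal := by
            refine ENNReal.toReal_mono Icc_vol_fin (measure_mono inter_subset_right)
        _ ≤ y := by rw [Real.volume_Icc, ENNReal.toReal_ofReal (by linarith [hy.1])]; linarith
    have h2 : max (∫ x in A ∩ Icc z 1, (w x y - w x z)) 0 ≤ 1 - z := by
      refine max_le ?_ (by linarith [hz.2])
      calc (∫ x in A ∩ Icc z 1, (w x y - w x z))
          ≤ (volume (A ∩ Icc z 1)).toReal := by
            refine setIntegral_le_toReal (hA.inter measurableSet_Icc)
              (ne_top_of_le_ne_top Icc_vol_fin (measure_mono inter_subset_right)) ?_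
            intro x hx
            have hx1 : x ∈ Icc (0:ℝ) 1 := hA1 hx.1
            have := (hw.2.2 x y hx1 hy).2
            have := (hw.2.2 x z hx1 hz).1
            linarith
        _ ≤ (volume (Icc z 1)).toReal := by
            refine ENNReal.toReal_mono Icc_vol_fin (measure_mono inter_subset_right)
        _ ≤ 1 - z := by
            rw [Real.volume_Icc, ENNReal.toReal_ofReal (by linarith [hz.2])]
    linarith
  have hone : (∫ _z in Icc (0:ℝ) 1, (1:ℝ)) = 1 := by
    rw [setIntegral_const]; simp [Real.volume_Icc]
  have hinner : ∀ y ∈ Icc (0:ℝ) 1, (∫ z in Icc (0:ℝ) 1, (if y < z then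
      max (∫ x in A ∩ Icc 0 y, (w x z - w x y)) 0
        + max (∫ x in A ∩ Icc z 1, (w x y - w x z)) 0 else 0)) ≤ 1 := by
    intro y hy
    calc _ ≤ (∫ _z in Icc (0:ℝ) 1, (1:ℝ)) := by
          refine integral_mono_of_nonneg (Filter.Eventually.of_forall fun z => hGnn y z) ?_ ?_
          · exact integrableOn_const Icc_vol_fin
          · filter_upwards [ae_restrict_mem measurableSet_Icc] with z hz
            exact hGle y hy z hz
      _ = 1 := hone
  rw [gammaA]
  calc _ ≤ (∫ _y in Icc (0:ℝ) 1, (1:ℝ)) := by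
        refine integral_mono_of_nonneg ?_ ?_ ?_
        · exact Filter.Eventually.of_forall fun y => integral_nonneg fun z => hGnn y z
        · exact integrableOn_const Icc_vol_fin
        · filter_upwards [ae_restrict_mem measurableSet_Icc] with y hy
          exact hinner y hy
    _ = 1 := hone

lemma Gamma_le_one {w : ℝ → ℝ → ℝ} (hw : IsGraphon w) : Gamma w ≤ 1 := by
  refine Real.sSup_le ?_ one_pos.le
  rintro r ⟨A, hA, hA1, rfl⟩
  exact gammaA_le_one hw hA hA1

lemma exists_subset_volume_eq {E : Set ℝ} (hE : MeasurableSet E) {c : ℝ} (hc : 0 ≤ c)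
    (hEsub : E ⊆ Icc 0 c) {m : ℝ} (h0 : 0 ≤ m) (hm : ENNReal.ofReal m ≤ volume E) :
    ∃ P : Set ℝ, MeasurableSet P ∧ P ⊆ E ∧ volume P = ENNReal.ofReal m := by
  have hEfin : volume E ≠ ⊤ :=
    ne_top_of_le_ne_top Icc_vol_fin (measure_mono hEsub)
  set f : ℝ → ℝ := fun t => (volume (E ∩ Iic t)).toReal with hf
  have hfin : ∀ t, volume (E ∩ Iic t) ≠ ⊤ :=
    fun t => ne_top_of_le_ne_top hEfin (measure_mono inter_subset_left)
  have hmono : Monotone f := fun a b hab =>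
    ENNReal.toReal_mono (hfin b) (measure_mono (inter_subset_inter_right _ (Iic_subset_Iic.2 hab)))
  have hlip : ∀ a b : ℝ, a ≤ b → f b ≤ f a + (b - a) := by
    intro a b hab
    have hsub : E ∩ Iic b ⊆ (E ∩ Iic a) ∪ Ioc a b := by
      rintro x ⟨hxE, hxb⟩
      rcases le_or_gt x a with h | h
      · exact Or.inl ⟨hxE, h⟩
      · exact Or.inr ⟨h, hxb⟩
    have := (measure_mono hsub).trans (measure_union_le (μ := volume) (E ∩ Iic a) (Ioc a b))
    have h2 : volume (Ioc a b) = ENNReal.ofReal (b - a) := by rw [Real.volume_Ioc]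
    calc f b ≤ ((volume (E ∩ Iic a)) + volume (Ioc a b)).toReal :=
          ENNReal.toReal_mono (by
            rw [h2]; exact ENNReal.add_ne_top.2 ⟨hfin a, ENNReal.ofReal_ne_top⟩) this
      _ = f a + (b - a) := by
          rw [ENNReal.toReal_add (hfin a) (by rw [h2]; exact ENNReal.ofReal_ne_top), h2,
            ENNReal.toReal_ofReal (by linarith)]
  have hcont : Continuous f := by
    refine (LipschitzWith.of_dist_le_mul (K := 1) ?_).continuous
    intro a b
    rw [Real.dist_eq, Real.dist_eq, NNReal.coe_one, one_mul]
    rcases le_total a b with h | h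
    · rw [abs_sub_comm, abs_of_nonneg (by linarith [hmono h]), abs_of_nonpos (by linarith)]
      have := hlip a b h; linarith
    · rw [abs_of_nonneg (by linarith [hmono h]), abs_of_nonneg (by linarith)]
      have := hlip b a h; linarith
  have hflo : f (-1) = 0 := by
    have : E ∩ Iic (-1) = ∅ := by
      rw [eq_empty_iff_forall_notMem]
      rintro x ⟨hxE, hx1⟩
      have := (hEsub hxE).1
      simp only [mem_Iic] at hx1; linarith
    rw [hf]; simp [this]
  have hfhi : m ≤ f c := by
    have hEc : E ∩ Iic c = E := inter_eq_self_of_subset_left fun x hx => (hEsub hx).2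
    rw [hf]; simp only [hEc]
    calc m = (ENNReal.ofReal m).toReal := (ENNReal.toReal_ofReal h0).symm
      _ ≤ (volume E).toReal := ENNReal.toReal_mono hEfin hm
  have hmem : m ∈ Icc (f (-1)) (f c) := by rw [hflo]; exact ⟨h0, hfhi⟩
  obtain ⟨t, _, hft⟩ := intermediate_value_Icc (by linarith : (-1:ℝ) ≤ c)
    hcont.continuousOn hmem
  refine ⟨E ∩ Iic t, hE.inter measurableSet_Iic, inter_subset_left, ?_⟩
  rw [← ENNReal.ofReal_toReal (hfin t)]
  have : (volume (E ∩ Iic t)).toReal = m := hft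
  rw [this]

lemma avgOn_eq_div {w : ℝ → ℝ → ℝ} {α : ℝ} {S T : Set ℝ}
    (hvS : (volume S).toReal = α) (hvT : (volume T).toReal = α) :
    avgOn w S T = (∫ s in S, ∫ t in T, w s t) / (α * α) := by
  rw [avgOn, hvS, hvT]

lemma phi_le_iSup {w : ℝ → ℝ → ℝ} (hw : IsGraphon w) {α : ℝ} (hα : 0 < α) (hα1 : α ≤ 1)
    {x : ℝ} (y : ℝ) (hx : α < x) :
    phi w α x y ≤ ⨆ q : ℚ, if (q:ℝ) < x then phi w α q y else ⊥ := by
  set B : EReal := ⨆ q : ℚ, if (q:ℝ) < x then phi w α q y else ⊥ with hB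
  refine sSup_le ?_
  rintro a ⟨r, hr, rfl⟩
  -- extract sets
  obtain ⟨S, T, hS, hT, hSx, hTy, hvS, hvT, hrval⟩ := mem_vset_sets hα hr
  have hy : y ≤ 1 - α := by
    have := subset_Icc_bounds hα hTy hvT; linarith
  obtain ⟨q0, hq0α, hq0x⟩ := exists_rat_btwn hx
  have hphiq0 : (0 : EReal) ≤ phi w α q0 y := phi_nonneg hw hα hα1 hq0α.le hy
  have hq0B : phi w α (q0:ℝ) y ≤ B := by
    rw [hB]
    have : phi w α (q0:ℝ) y = if (q0:ℝ) < x then phi w α q0 y else ⊥ := (if_pos hq0x).symm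
    rw [this]
    exact le_iSup (fun q : ℚ => if (q:ℝ) < x then phi w α q y else ⊥) q0
  have hB0 : (0 : EReal) ≤ B := le_trans hphiq0 hq0B
  set g : ℝ → ℝ := fun s => ∫ t in T, w s t with hg
  have hgm : Measurable g := g_meas hw.1 T
  have hSfin : volume S ≠ ⊤ := by
    refine ne_top_of_le_ne_top Icc_vol_fin (measure_mono hSx)
  by_cases hint : IntegrableOn g S
  swap
  · have : avgOn w S T = 0 := by
      rw [avgOn_eq_div hvS hvT]
      rw [integral_undef hint, zero_div]
    rw [hrval, this]
    calc ((0:ℝ) : EReal) = (0 : EReal) := by norm_num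
      _ ≤ phi w α (q0:ℝ) y := hphiq0
      _ ≤ B := hq0B
  -- main case
  have hkey : ∀ ε : ℝ, 0 < ε → ∃ q : ℚ, (q:ℝ) < x ∧
      ∃ r' ∈ vset w α (q:ℝ) y, avgOn w S T - ε ≤ r' := by
    intro ε hε
    set δ0 : ℝ := (x - α) / 2 with hδ0
    have hδ0pos : 0 < δ0 := by rw [hδ0]; linarith
    set t0 : ℝ := x - δ0 with ht0
    have ht0α : α < t0 := by rw [ht0, hδ0]; linarith
    have ht0pos : 0 < t0 := lt_trans hα ht0α
    have ht0x : t0 < x := by rw [ht0]; linarith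
    set W : Set ℝ := Icc 0 t0 \ S with hW
    have hWm : MeasurableSet W := measurableSet_Icc.diff hS
    have hvolS : volume S = ENNReal.ofReal α := by
      rw [← ENNReal.ofReal_toReal hSfin, hvS]
    have hWvol : ENNReal.ofReal (t0 - α) ≤ volume W := by
      have hsub : Icc 0 t0 ⊆ W ∪ S := fun s hs => by
        by_cases hsS : s ∈ S
        · exact Or.inr hsS
        · exact Or.inl ⟨hs, hsS⟩
      have h1 : ENNReal.ofReal t0 ≤ volume W + volume S := by
        calc ENNReal.ofReal t0 = volume (Icc 0 t0) := by
              rw [Real.volume_Icc]; norm_num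
          _ ≤ volume (W ∪ S) := measure_mono hsub
          _ ≤ volume W + volume S := measure_union_le _ _
      rw [hvolS] at h1
      rw [ENNReal.ofReal_sub _ hα.le]
      exact tsub_le_iff_right.2 h1
    set w0 : ℝ := t0 - α with hw0
    have hw0pos : 0 < w0 := by rw [hw0]; linarith
    -- tame set
    have hUW : (⋃ n : ℕ, (W ∩ {s | |g s| ≤ (n:ℝ)})) = W := by
      ext s
      simp only [mem_iUnion, mem_inter_iff, mem_setOf_eq]
      constructor
      · rintro ⟨n, hn, _⟩; exact hn
      · intro hs
        obtain ⟨n, hn⟩ := exists_nat_ge (|g s|)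
        exact ⟨n, hs, hn⟩
    have hWn_mono : Monotone (fun n : ℕ => W ∩ {s | |g s| ≤ (n:ℝ)}) := by
      intro a b hab
      refine inter_subset_inter_right _ ?_
      intro s hs
      simp only [mem_setOf_eq] at hs ⊢
      exact le_trans hs (by exact_mod_cast hab)
    have htend := tendsto_measure_iUnion_atTop (μ := volume) hWn_mono
    rw [hUW] at htend
    have hev : ∀ᶠ n : ℕ in Filter.atTop,
        ENNReal.ofReal (w0 / 2) < volume (W ∩ {s | |g s| ≤ (n:ℝ)}) := by
      have hlt : ENNReal.ofReal (w0 / 2) < volume W := by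
        refine lt_of_lt_of_le ?_ hWvol
        rw [ENNReal.ofReal_lt_ofReal_iff hw0pos]; linarith
      exact Filter.Tendsto.eventually_const_lt hlt htend
    obtain ⟨M, hM⟩ := hev.exists
    set Tame : Set ℝ := W ∩ {s | |g s| ≤ (M:ℝ)} with hTame
    have hTamem : MeasurableSet Tame :=
      hWm.inter (measurableSet_le hgm.abs measurable_const)
    have hTamesub : Tame ⊆ Icc 0 t0 := fun s hs => hs.1.1
    -- dominated convergence
    set u : ℕ → ℝ := fun n => x - δ0 / (n + 1) with hu
    have hut0 : ∀ n, t0 ≤ u n := by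
      intro n
      rw [hu, ht0]
      simp only []
      have h1 : δ0 / ((n:ℝ) + 1) ≤ δ0 / 1 := by
        refine div_le_div_of_nonneg_left hδ0pos.le one_pos ?_
        · exact_mod_cast Nat.succ_le_succ (Nat.zero_le n)
      linarith [h1]
    have hux : ∀ n, u n < x := by
      intro n
      rw [hu]
      simp only []
      have : 0 < δ0 / ((n:ℝ) + 1) := by positivity
      linarith
    have humono : Monotone u := by
      intro a b hab
      rw [hu]
      simp only []
      have : δ0 / ((b:ℝ) + 1) ≤ δ0 / ((a:ℝ) + 1) := by
        refine div_le_div_of_nonneg_left hδ0pos.le (by positivity) ?_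
        have : (a:ℝ) ≤ b := by exact_mod_cast hab
        linarith
      linarith
    have huU : (⋃ n : ℕ, (S ∩ Iic (u n))) = S ∩ Iio x := by
      ext s
      simp only [mem_iUnion, mem_inter_iff, mem_Iic, mem_Iio]
      constructor
      · rintro ⟨n, hsS, hsu⟩; exact ⟨hsS, lt_of_le_of_lt hsu (hux n)⟩
      · rintro ⟨hsS, hsx⟩
        have : Filter.Tendsto u Filter.atTop (nhds x) := by
          rw [hu]
          have h0 : Filter.Tendsto (fun n : ℕ => δ0 / ((n:ℝ) + 1)) Filter.atTop (nhds 0) := by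
            refine Filter.Tendsto.div_atTop tendsto_const_nhds ?_
            exact Filter.tendsto_atTop_add_const_right _ 1 tendsto_natCast_atTop_atTop
          have h1 : Filter.Tendsto (fun n : ℕ => x - δ0 / ((n:ℝ) + 1)) Filter.atTop
              (nhds (x - 0)) := Filter.Tendsto.sub tendsto_const_nhds h0
          simpa using h1
        have := this.eventually (eventually_gt_nhds hsx)
        obtain ⟨n, hn⟩ := this.exists
        exact ⟨n, hsS, hn.le⟩
    have hSIio : ∫ s in S ∩ Iio x, g s = ∫ s in S, g s := by
      refine setIntegral_congr_set ?_
      have : S \ (S ∩ Iio x) ⊆ {x} := by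
        rintro s ⟨hsS, hns⟩
        have hsx := (hSx hsS).2
        rcases lt_or_eq_of_le hsx with h | h
        · exact absurd ⟨hsS, h⟩ hns
        · exact h
      rw [ae_eq_set]
      constructor
      · exact measure_mono_null (t := (∅ : Set ℝ)) (fun s hs => absurd hs.1.1 hs.2)
          measure_empty
      · exact measure_mono_null this (measure_singleton x)
    have hDCT : Filter.Tendsto (fun n => ∫ s in S ∩ Iic (u n), g s) Filter.atTop
        (nhds (∫ s in S, g s)) := by
      have hmono2 : Monotone fun n : ℕ => S ∩ Iic (u n) := fun a b hab =>
        inter_subset_inter_right _ (Iic_subset_Iic.2 (humono hab))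
      have h6 : IntegrableOn g (⋃ n : ℕ, S ∩ Iic (u n)) := by
        rw [huU]; exact hint.mono_set inter_subset_left
      have h7 := tendsto_setIntegral_of_monotone (μ := volume)
        (fun n : ℕ => (hS.inter measurableSet_Iic)) hmono2 h6
      rw [huU, hSIio] at h7
      exact h7
    -- choose n
    have hεα : 0 < ε * (α * α) / 2 := by positivity
    have hev2 : ∀ᶠ n : ℕ in Filter.atTop,
        |(∫ s in S ∩ Iic (u n), g s) - ∫ s in S, g s| < ε * (α * α) / 2 := by
      have := hDCT.sub_const (∫ s in S, g s)
      simp only [sub_self] at this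
      have h2 := this.abs
      rw [abs_zero] at h2
      exact h2.eventually (eventually_lt_nhds hεα)
    have hev3 : ∀ᶠ n : ℕ in Filter.atTop,
        δ0 / ((n:ℝ) + 1) ≤ min (w0 / 2) (ε * (α * α) / (2 * ((M:ℝ) + 1))) := by
      have hc : 0 < min (w0 / 2) (ε * (α * α) / (2 * ((M:ℝ) + 1))) := by
        refine lt_min (by linarith) (by positivity)
      obtain ⟨N, hN⟩ := exists_nat_ge (δ0 / min (w0 / 2) (ε * (α * α) / (2 * ((M:ℝ) + 1))))
      refine Filter.eventually_atTop.2 ⟨N, fun n hn => ?_⟩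
      rw [div_le_iff₀ (by positivity)]
      rw [div_le_iff₀ hc] at hN
      have hNn : (N:ℝ) ≤ n := by exact_mod_cast hn
      nlinarith [hc, hN, hNn]
    obtain ⟨n, hn2, hn3⟩ := (hev2.and hev3).exists
    set t : ℝ := u n with ht
    set S1 : Set ℝ := S ∩ Iic t with hS1
    have hS1m : MeasurableSet S1 := hS.inter measurableSet_Iic
    have hS1sub : S1 ⊆ S := inter_subset_left
    have hS1fin : volume S1 ≠ ⊤ := ne_top_of_le_ne_top hSfin (measure_mono hS1sub)
    set m : ℝ := α - (volume S1).toReal with hm0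
    have hm_nonneg : 0 ≤ m := by
      rw [hm0]
      have : (volume S1).toReal ≤ (volume S).toReal :=
        ENNReal.toReal_mono hSfin (measure_mono hS1sub)
      rw [hvS] at this; linarith
    have hm_le : m ≤ x - t := by
      rw [hm0]
      have hsub2 : S ⊆ S1 ∪ Ioc t x := by
        intro s hs
        rcases le_or_gt s t with h | h
        · exact Or.inl ⟨hs, h⟩
        · exact Or.inr ⟨h, (hSx hs).2⟩
      have h1 : volume S ≤ volume S1 + ENNReal.ofReal (x - t) := by
        calc volume S ≤ volume (S1 ∪ Ioc t x) := measure_mono hsub2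
          _ ≤ volume S1 + volume (Ioc t x) := measure_union_le _ _
          _ = volume S1 + ENNReal.ofReal (x - t) := by rw [Real.volume_Ioc]
      have h2 : (volume S).toReal ≤ (volume S1).toReal + (x - t) := by
        calc (volume S).toReal ≤ (volume S1 + ENNReal.ofReal (x - t)).toReal :=
              ENNReal.toReal_mono
                (ENNReal.add_ne_top.2 ⟨hS1fin, ENNReal.ofReal_ne_top⟩) h1
          _ = (volume S1).toReal + (x - t) := by
              rw [ENNReal.toReal_add hS1fin ENNReal.ofReal_ne_top,
                ENNReal.toReal_ofReal (by linarith [hux n])]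
      rw [hvS] at h2; linarith
    have hxt : x - t = δ0 / ((n:ℝ) + 1) := by rw [ht, hu]; ring
    have hm_le_w0 : m ≤ w0 / 2 := by
      refine le_trans hm_le ?_
      rw [hxt]
      exact le_trans hn3 (min_le_left _ _)
    have hm_le_ε : (M:ℝ) * m ≤ ε * (α * α) / 2 := by
      have h1 : m ≤ ε * (α * α) / (2 * ((M:ℝ) + 1)) := by
        refine le_trans hm_le ?_
        rw [hxt]
        exact le_trans hn3 (min_le_right _ _)
      calc (M:ℝ) * m ≤ (M:ℝ) * (ε * (α * α) / (2 * ((M:ℝ) + 1))) := by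
            refine mul_le_mul_of_nonneg_left h1 (by positivity)
        _ = (ε * (α * α) / 2) * ((M:ℝ) / ((M:ℝ) + 1)) := by
            field_simp
        _ ≤ ε * (α * α) / 2 := by
            refine mul_le_of_le_one_right (by positivity) ?_
            rw [div_le_one (by positivity)]; linarith
    -- find P
    obtain ⟨P, hPm, hPsub, hPvol⟩ := exists_subset_volume_eq hTamem ht0pos.le hTamesub
      hm_nonneg (le_trans (ENNReal.ofReal_le_ofReal hm_le_w0) hM.le)
    have hPfin : volume P ≠ ⊤ := by rw [hPvol]; exact ENNReal.ofReal_ne_top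
    have hPS : Disjoint S1 P := by
      refine disjoint_left.2 fun s hs1 hsP => ?_
      exact (hPsub hsP).1.2 (hS1sub hs1)
    set S' : Set ℝ := S1 ∪ P with hS'
    have hS'm : MeasurableSet S' := hS1m.union hPm
    have hS'vol : (volume S').toReal = α := by
      rw [hS', measure_union hPS hPm, ENNReal.toReal_add hS1fin hPfin, hPvol,
        ENNReal.toReal_ofReal hm_nonneg, hm0]
      ring
    obtain ⟨q, hqt, hqx⟩ := exists_rat_btwn (hux n)
    have hS'q : S' ⊆ Icc 0 (q:ℝ) := by
      rintro s (hs | hs)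
      · exact ⟨(hSx hs.1).1, le_trans hs.2 hqt.le⟩
      · have h1 := hTamesub (hPsub hs)
        exact ⟨h1.1, le_trans h1.2 (le_trans (hut0 n) hqt.le)⟩
    have hmem' : avgOn w S' T ∈ vset w α (q:ℝ) y := by
      refine ⟨S', T, hS'm, hT, ?_, hS'vol, hvT, rfl⟩
      intro p hp
      rw [mem_prod] at hp ⊢
      exact ⟨hS'q hp.1, hTy hp.2⟩
    have hintS1 : IntegrableOn g S1 := hint.mono_set hS1sub
    have hintP : IntegrableOn g P :=
      integrableOn_of_bounded' hPm hPfin hgm fun s hs => (hPsub hs).2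
    have havg' : avgOn w S' T = ((∫ s in S1, g s) + ∫ s in P, g s) / (α * α) := by
      rw [avgOn_eq_div hS'vol hvT]
      congr 1
      exact setIntegral_union hPS hPm hintS1 hintP
    have havgS : avgOn w S T = (∫ s in S, g s) / (α * α) := by
      rw [avgOn_eq_div hvS hvT]
    have hPbound : |∫ s in P, g s| ≤ (M:ℝ) * m := by
      have h1 : ‖∫ s in P, g s‖ ≤ (M:ℝ) * (volume P).toReal := by
        refine norm_setIntegral_le_of_norm_le_const (by rw [hPvol]; exact ENNReal.ofReal_lt_top)
          ?_
        intro s hs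
        rw [Real.norm_eq_abs]
        exact (hPsub hs).2
      rw [Real.norm_eq_abs] at h1
      rwa [hPvol, ENNReal.toReal_ofReal hm_nonneg] at h1
    have hαα : (0:ℝ) < α * α := by positivity
    refine ⟨q, hqx, avgOn w S' T, hmem', ?_⟩
    rw [havg', havgS]
    have habs := abs_lt.1 hn2
    have hPlow : -(ε * (α * α) / 2) ≤ ∫ s in P, g s :=
      le_trans (neg_le_neg hm_le_ε) (abs_le.1 hPbound).1
    have heq : (∫ s in S, g s) / (α * α) - ε = ((∫ s in S, g s) - ε * (α * α)) / (α * α) := by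
      rw [sub_div, mul_div_assoc, div_self (ne_of_gt hαα), mul_one]
    rw [heq]
    rw [div_le_div_iff_of_pos_right hαα]
    have h5 : (∫ s in S ∩ Iic t, g s) ≥ (∫ s in S, g s) - ε * (α * α) / 2 := by
      linarith [habs.1]
    linarith [h5, hPlow]
  -- conclude from hkey
  rw [hrval]
  by_contra hcon
  push_neg at hcon
  have hBne_top : B ≠ ⊤ := by
    intro h
    rw [h] at hcon
    exact absurd hcon (not_lt.2 le_top)
  have hBne_bot : B ≠ ⊥ := by
    intro h
    rw [h] at hB0
    exact absurd hB0 (by simp)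
  have hBcoe : ((B.toReal : ℝ) : EReal) = B := EReal.coe_toReal hBne_top hBne_bot
  have hbr : B.toReal < avgOn w S T := by
    rw [← hBcoe] at hcon
    exact_mod_cast hcon
  set ε : ℝ := (avgOn w S T - B.toReal) / 2 with hεdef
  have hεpos : 0 < ε := by rw [hεdef]; linarith
  obtain ⟨q, hqx, r', hr'mem, hr'ge⟩ := hkey ε hεpos
  have hr'B : (r' : EReal) ≤ B := by
    refine le_trans (le_sSup ⟨r', hr'mem, rfl⟩ : (r' : EReal) ≤ phi w α (q:ℝ) y) ?_
    calc phi w α (q:ℝ) y = if (q:ℝ) < x then phi w α (q:ℝ) y else ⊥ := (if_pos hqx).symm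
      _ ≤ B := le_iSup (fun q : ℚ => if (q:ℝ) < x then phi w α (q:ℝ) y else ⊥) q
  have : r' ≤ B.toReal := by
    rw [← hBcoe] at hr'B
    exact_mod_cast hr'B
  rw [hεdef] at hr'ge
  linarith

lemma phi_eq_iSup {w : ℝ → ℝ → ℝ} (hw : IsGraphon w) {α : ℝ} (hα : 0 < α) (hα1 : α ≤ 1)
    {x : ℝ} (y : ℝ) (hx : x ≠ α) :
    phi w α x y = ⨆ q : ℚ, if (q:ℝ) < x then phi w α q y else ⊥ := by
  rcases lt_or_gt_of_ne hx with h | h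
  · rw [phi_bot_left hα h]
    symm
    rw [iSup_eq_bot]
    intro q
    split
    case isTrue hq => exact phi_bot_left hα (lt_trans hq h)
    case isFalse => rfl
  · refine le_antisymm (phi_le_iSup hw hα hα1 y h) ?_
    refine iSup_le fun q => ?_
    split
    case isTrue hq => exact phi_mono hq.le le_rfl
    case isFalse => exact bot_le

lemma phi_antitone {w : ℝ → ℝ → ℝ} {α c : ℝ} : Antitone fun y => phi w α c y :=
  fun _a _b hab => phi_mono le_rfl hab

lemma measurable_phi {w : ℝ → ℝ → ℝ} (hw : IsGraphon w) {α : ℝ} (hα : 0 < α)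
    (hα1 : α ≤ 1) : Measurable fun p : ℝ × ℝ => phi w α p.1 p.2 := by
  have hmeas_y : ∀ c : ℝ, Measurable fun y => phi w α c y :=
    fun c => (phi_antitone (w := w) (α := α) (c := c)).measurable
  have hrep : (fun p : ℝ × ℝ => phi w α p.1 p.2) = fun p : ℝ × ℝ =>
      if p.1 = α then phi w α α p.2
      else ⨆ q : ℚ, if (q:ℝ) < p.1 then phi w α q p.2 else ⊥ := by
    funext p
    by_cases h : p.1 = α
    · rw [if_pos h, h]
    · rw [if_neg h, phi_eq_iSup hw hα hα1 p.2 h]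
  rw [hrep]
  refine Measurable.ite ?_ ?_ ?_
  · exact measurable_fst (measurableSet_singleton α)
  · exact (hmeas_y α).comp measurable_snd
  · refine Measurable.iSup fun q => ?_
    refine Measurable.ite ?_ ?_ ?_
    · exact measurableSet_lt measurable_const measurable_fst
    · exact (hmeas_y (q:ℝ)).comp measurable_snd
    · exact measurable_const

lemma robApprox_of_le {w α} {x y : ℝ} (h : x ≤ y) :
    robApprox w α x y = sSup (vset w α x y) := by
  rw [robApprox, if_pos h]; rfl

lemma robApprox_of_not_le {w α} {x y : ℝ} (h : ¬ x ≤ y) :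
    robApprox w α x y = sSup (vset w α y x) := by
  rw [robApprox, if_neg h]; rfl

lemma robApprox_toReal_of_le {w α} {x y : ℝ} (h : x ≤ y) :
    robApprox w α x y = (phi w α x y).toReal := by
  rw [robApprox_of_le h]
  exact toReal_sSup_image (vset w α x y)

lemma robApprox_toReal_of_not_le {w α} {x y : ℝ} (h : ¬ x ≤ y) :
    robApprox w α x y = (phi w α y x).toReal := by
  rw [robApprox_of_not_le h]
  exact toReal_sSup_image (vset w α y x)

lemma measurable_robApprox {w : ℝ → ℝ → ℝ} (hw : IsGraphon w) {α : ℝ} (hα : 0 < α)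
    (hα1 : α ≤ 1) : Measurable (Function.uncurry (robApprox w α)) := by
  have hrep : Function.uncurry (robApprox w α) = fun p : ℝ × ℝ =>
      if p.1 ≤ p.2 then (phi w α p.1 p.2).toReal else (phi w α p.2 p.1).toReal := by
    funext p
    by_cases h : p.1 ≤ p.2
    · rw [if_pos h]
      exact robApprox_toReal_of_le h
    · rw [if_neg h]
      exact robApprox_toReal_of_not_le h
  rw [hrep]
  refine Measurable.ite ?_ ?_ ?_
  · exact measurableSet_le measurable_fst measurable_snd
  · exact (measurable_phi hw hα hα1).ereal_toReal
  · exact ((measurable_phi hw hα hα1).comp measurable_swap).ereal_toReal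

/-- `R_w` is a Robinson graphon; in particular if `(a,b) ∈ Δ` and
`(x,y) ∈ LR(a,b) = ([a,b]×[a,b]) ∩ Δ`, then `R_w(a,b) ≤ R_w(x,y)`. -/
theorem robApprox_isRobinson (w : ℝ → ℝ → ℝ) (hw : IsGraphon w)
    (hΓ : 0 < Gamma w) (α : ℝ) (hα : α = Gamma w ^ ((2:ℝ)/7)) :
    IsGraphon (robApprox w α) ∧ IsRobinson (robApprox w α) ∧
      ∀ a b x y : ℝ, 0 ≤ a → a ≤ b → b ≤ 1 →
        a ≤ x → x ≤ b → a ≤ y → y ≤ b → x ≤ y →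
        robApprox w α a b ≤ robApprox w α x y := by
  have hα0 : 0 < α := by rw [hα]; exact Real.rpow_pos_of_pos hΓ _
  have hΓ1 : Gamma w ≤ 1 := Gamma_le_one hw
  have hα1 : α ≤ 1 := by
    rw [hα]; exact Real.rpow_le_one hΓ.le hΓ1 (by norm_num)
  refine ⟨⟨measurable_robApprox hw hα0 hα1, ?_, ?_⟩, ?_, ?_⟩
  · -- symmetry
    intro x y
    by_cases h1 : x ≤ y
    · by_cases h2 : y ≤ x
      · have : x = y := le_antisymm h1 h2
        rw [this]
      · rw [robApprox_of_le h1, robApprox_of_not_le h2]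
    · have h2 : y ≤ x := (not_le.1 h1).le
      rw [robApprox_of_not_le h1, robApprox_of_le h2]
  · -- range
    intro x y hx hy
    by_cases h : x ≤ y
    · rw [robApprox_of_le h]
      exact sSup_mem_Icc01 (vset_subset_Icc hw hα0 hx.1 hx.2 hy.1 hy.2)
    · rw [robApprox_of_not_le h]
      exact sSup_mem_Icc01 (vset_subset_Icc hw hα0 hy.1 hy.2 hx.1 hx.2)
  · -- Robinson
    intro x y z h0x hxy hyz hz1
    refine le_min ?_ ?_
    · rw [robApprox_of_le (hxy.trans hyz), robApprox_of_le hxy]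
      exact sSup_le_sSup01 (vset_mono le_rfl hyz)
        (vset_subset_Icc hw hα0 h0x (hxy.trans (hyz.trans hz1))
          (le_trans h0x hxy) (hyz.trans hz1))
    · rw [robApprox_of_le (hxy.trans hyz), robApprox_of_le hyz]
      exact sSup_le_sSup01 (vset_mono hxy le_rfl)
        (vset_subset_Icc hw hα0 (le_trans h0x hxy) (hyz.trans hz1)
          (le_trans (le_trans h0x hxy) hyz) hz1)
  · -- final
    intro a b x y h0a hab hb1 hax hxb hay hyb hxy
    rw [robApprox_of_le hab, robApprox_of_le hxy]
    exact sSup_le_sSup01 (vset_mono hax hyb)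
      (vset_subset_Icc hw hα0 (le_trans h0a hax) (le_trans hxb hb1)
        (le_trans h0a hay) (le_trans hyb hb1))
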